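/- arXiv:1404.0484 — 2 statements merged into one kernel-verified Lean document; each statement's English description precedes it below -/
import Mathlib

section
/- For every n ≥ 2 and every i with 2 ≤ i ≤ n, the degrees of consecutive vertices in the underlying undirected graph of J_n(1) differ by at most one: |d_n(i) − d_n(i−1)| ≤ 1. -/
/-- The Jaco out-degree function `f`: `f 0 = 0` and, for `n ≥ 1`,
`f n = n - #{k : 1 ≤ k < n ∧ k + f k ≥ n}` (the out-degree of `v_n` in `J_∞(1)`). -/
def jacoF : ℕ → ℕ
  | 0 => 0
  | n + 1 =>
    (n + 1) - ((Finset.range (n + 1)).attach.filter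
      (fun a => 1 ≤ a.1 ∧ n + 1 ≤ a.1 + jacoF a.1)).card
  decreasing_by all_goals exact Finset.mem_range.mp a.2

/-- The in-degree `d⁻(j) = #{i : 1 ≤ i < j ∧ j ≤ i + f i}` of `v_j` in `J_∞(1)`. -/
def jacoDin (j : ℕ) : ℕ := ((Finset.Ico 1 j).filter (fun i => j ≤ i + jacoF i)).card

/-- The degree `d_n(j) = d⁻(j) + #{k : j < k ≤ n ∧ k ≤ j + f j}` of `v_j` in the
underlying undirected graph of the finite Jaco graph `J_n(1)`. -/
def jacoDeg (n j : ℕ) : ℕ :=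
  jacoDin j + ((Finset.Ioc j n).filter (fun k => k ≤ j + jacoF j)).card

/-- The maximum degree `Δ(J_n(1)) = max_{1 ≤ j ≤ n} d_n(j)`. -/
def jacoDelta (n : ℕ) : ℕ := (Finset.Icc 1 n).sup (jacoDeg n)

/-- The Jaconian set `𝕁(J_n(1)) = {j : 1 ≤ j ≤ n ∧ d_n(j) = Δ(J_n(1))}`. -/
def jacoJ (n : ℕ) : Finset ℕ := (Finset.Icc 1 n).filter (fun j => jacoDeg n j = jacoDelta n)


lemma jacoDin_le (j : ℕ) (hj : 1 ≤ j) : jacoDin j + 1 ≤ j := by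
  have h := Finset.card_filter_le (Finset.Ico 1 j) (fun i => j ≤ i + jacoF i)
  rw [Nat.card_Ico] at h
  unfold jacoDin
  omega

lemma jacoF_add_din (n : ℕ) : jacoF (n + 1) + jacoDin (n + 1) = n + 1 := by
  have hcard : ((Finset.range (n + 1)).attach.filter
      (fun a => 1 ≤ a.1 ∧ n + 1 ≤ a.1 + jacoF a.1)).card
      = jacoDin (n + 1) := by
    unfold jacoDin
    apply Finset.card_bij (fun a _ => a.1)
    · rintro ⟨a, ha⟩ h
      simp only [Finset.mem_filter, Finset.mem_attach, true_and] at h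
      simp only [Finset.mem_filter, Finset.mem_Ico]
      exact ⟨⟨h.1, Finset.mem_range.mp ha⟩, h.2⟩
    · rintro ⟨a, _⟩ _ ⟨b, _⟩ _ h
      simpa using h
    · intro b hb
      simp only [Finset.mem_filter, Finset.mem_Ico] at hb
      exact ⟨⟨b, Finset.mem_range.mpr hb.1.2⟩, by
        simp only [Finset.mem_filter, Finset.mem_attach, true_and]
        exact ⟨hb.1.1, hb.2⟩, rfl⟩
  have hle := jacoDin_le (n + 1) (by omega)
  rw [jacoF]
  rw [hcard]
  omega

lemma jacoDin_succ_le (j : ℕ) : jacoDin (j + 1) ≤ jacoDin j + 1 := by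
  unfold jacoDin
  have hsub : (Finset.Ico 1 (j + 1)).filter (fun i => j + 1 ≤ i + jacoF i) ⊆
      insert j ((Finset.Ico 1 j).filter (fun i => j ≤ i + jacoF i)) := by
    intro x hx
    simp only [Finset.mem_filter, Finset.mem_Ico] at hx
    rcases eq_or_lt_of_le (Nat.lt_succ_iff.mp hx.1.2) with h | h
    · rw [h]; exact Finset.mem_insert_self _ _
    · exact Finset.mem_insert_of_mem (by
        simp only [Finset.mem_filter, Finset.mem_Ico]
        exact ⟨⟨hx.1.1, h⟩, by omega⟩)
  calc _ ≤ _ := Finset.card_le_card hsub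
    _ ≤ _ := Finset.card_insert_le _ _

lemma jacoF_mono : Monotone jacoF := by
  apply monotone_nat_of_le_succ
  intro j
  cases j with
  | zero => rw [jacoF]; exact Nat.zero_le _
  | succ m =>
    have h1 := jacoF_add_din m
    have h2 := jacoF_add_din (m + 1)
    have h3 := jacoDin_succ_le (m + 1)
    omega

lemma jacoG_strictMono : StrictMono (fun i => i + jacoF i) := by
  apply strictMono_nat_of_lt_succ
  intro i
  have := jacoF_mono (show i ≤ i + 1 by omega)
  show i + jacoF i < (i + 1) + jacoF (i + 1)
  omega

lemma jacoF_pos (j : ℕ) (hj : 1 ≤ j) : 1 ≤ jacoF j := by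
  cases j with
  | zero => omega
  | succ m =>
    have h1 := jacoF_add_din m
    have h2 := jacoDin_le (m + 1) (by omega)
    omega

lemma jacoDin_le_succ (j : ℕ) (hj : 1 ≤ j) : jacoDin j ≤ jacoDin (j + 1) := by
  unfold jacoDin
  apply Finset.card_le_card_of_injOn (fun i => if i + jacoF i = j then j else i)
  · intro x hx
    simp only [Finset.mem_coe, Finset.mem_filter, Finset.mem_Ico] at hx ⊢
    by_cases h : x + jacoF x = j
    · rw [if_pos h]
      have := jacoF_pos j hj
      exact ⟨⟨hj, by omega⟩, by omega⟩
    · rw [if_neg h]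
      exact ⟨⟨hx.1.1, by omega⟩, by omega⟩
  · intro a ha b hb hab
    simp only [Finset.mem_coe, Finset.mem_filter, Finset.mem_Ico] at ha hb
    by_cases h1 : a + jacoF a = j <;> by_cases h2 : b + jacoF b = j <;>
      simp only [h1, h2, if_pos, if_neg, if_true, if_false] at hab
    · exact jacoG_strictMono.injective (h1.trans h2.symm)
    · omega
    · omega
    · exact hab

lemma jacoF_add_din' (j : ℕ) (hj : 1 ≤ j) : jacoF j + jacoDin j = j := by
  cases j with
  | zero => omega
  | succ m => exact jacoF_add_din m


lemma jacoDeg_eq (n j : ℕ) :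
    jacoDeg n j = jacoDin j + (min n (j + jacoF j) - j) := by
  unfold jacoDeg
  congr 1
  have : (Finset.Ioc j n).filter (fun k => k ≤ j + jacoF j)
      = Finset.Ioc j (min n (j + jacoF j)) := by
    ext x
    simp only [Finset.mem_filter, Finset.mem_Ioc, le_min_iff]
    omega
  rw [this, Nat.card_Ioc]


/-- Degrees of consecutive vertices in the underlying undirected graph of `J_n(1)`
differ by at most one. -/
theorem stmt_1 (n i : ℕ) (hn : 2 ≤ n) (hi : 2 ≤ i) (hin : i ≤ n) :
    |(jacoDeg n i : ℤ) - (jacoDeg n (i - 1) : ℤ)| ≤ 1 := by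
  obtain ⟨j, rfl⟩ := Nat.exists_eq_succ_of_ne_zero (show i ≠ 0 by omega)
  simp only [Nat.succ_eq_add_one] at *
  have hj : 1 ≤ j := by omega
  have h1 := jacoF_add_din' (j + 1) (by omega)
  have h2 := jacoF_add_din' j hj
  have h3 := jacoDin_le_succ j hj
  have h4 := jacoDin_succ_le j
  have h5 := jacoDin_le j hj
  have h6 := jacoDin_le (j + 1) (by omega)
  have key : jacoDeg n (j + 1) ≤ jacoDeg n j + 1 ∧
      jacoDeg n j ≤ jacoDeg n (j + 1) + 1 := by
    rw [jacoDeg_eq, jacoDeg_eq]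
    omega
  rw [show j + 1 - 1 = j from rfl, abs_le]
  constructor <;> push_cast <;> omega
end

section
/- For every n ≥ 1, the Jaconian set of J_n(1) has cardinality at most 3: #𝕁(J_n(1)) ≤ 3. -/
lemma jacoF_eq (m : ℕ) : jacoF m = m - jacoDin m := by
  match m with
  | 0 => simp [jacoF, jacoDin]
  | n + 1 =>
    rw [jacoF, jacoDin]
    congr 1
    rw [Finset.filter_attach (fun a => 1 ≤ a ∧ n + 1 ≤ a + jacoF a) (Finset.range (n+1)),
      Finset.card_map, Finset.card_attach]
    congr 1
    rw [Finset.range_eq_Ico]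
    ext a
    simp only [Finset.mem_filter, Finset.mem_Ico]
    omega

lemma jacoDin_le_s6 (m : ℕ) : jacoDin m + 1 ≤ m ∨ m = 0 := by
  rcases Nat.eq_zero_or_pos m with h | h
  · right; exact h
  · left
    have : jacoDin m ≤ (Finset.Ico 1 m).card := Finset.card_filter_le _ _
    rw [Nat.card_Ico] at this
    omega

-- step lemma: f (i+1) ∈ {f i, f i + 1}
lemma jacoF_step (n : ℕ) : jacoF n ≤ jacoF (n + 1) ∧ jacoF (n + 1) ≤ jacoF n + 1 := by
  induction n using Nat.strong_induction_on with
  | _ n IH =>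
  rcases Nat.eq_zero_or_pos n with rfl | hn
  · constructor <;> simp [jacoF]
  have hd1 : jacoDin (n + 1) ≤ jacoDin n + 1 := by
    rw [jacoDin, jacoDin, show Finset.Ico 1 (n+1) = insert n (Finset.Ico 1 n) by
      ext a; simp only [Finset.mem_Ico, Finset.mem_insert]; omega]
    have h1 : ((Finset.Ico 1 n).filter (fun i => n + 1 ≤ i + jacoF i)).card ≤
        ((Finset.Ico 1 n).filter (fun i => n ≤ i + jacoF i)).card := by
      apply Finset.card_le_card
      intro i hi
      simp only [Finset.mem_filter, Finset.mem_Ico] at hi ⊢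
      omega
    rw [Finset.filter_insert]
    split
    · exact le_trans (Finset.card_insert_le _ _) (by omega)
    · omega
  have hd2 : jacoDin n ≤ jacoDin (n + 1) := by
    rw [jacoDin, jacoDin]
    apply Finset.card_le_card_of_injOn (fun i => i + 1)
    · intro i hi
      simp only [Finset.mem_coe, Finset.mem_filter, Finset.mem_Ico] at hi ⊢
      have hfi : jacoF i ≤ jacoF (i + 1) := (IH i (by omega)).1
      omega
    · intro a _ b _ h; simpa using h
  have e1 := jacoF_eq n
  have e2 := jacoF_eq (n + 1)
  have l1 := jacoDin_le_s6 n
  have l2 := jacoDin_le_s6 (n + 1)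
  omega

lemma jacoF_one : jacoF 1 = 1 := by
  rw [jacoF]
  have h : ((Finset.range 1).attach.filter (fun a => 1 ≤ a.1 ∧ 1 ≤ a.1 + jacoF a.1)) = ∅ := by
    rw [Finset.filter_eq_empty_iff]
    rintro ⟨a, ha⟩ -
    simp only [Finset.mem_range] at ha
    show ¬(1 ≤ a ∧ 1 ≤ a + jacoF a)
    omega
  rw [h]
  rfl

lemma jacoF_le_self (m : ℕ) : jacoF m ≤ m := by
  have := jacoF_eq m; omega

-- runs of f have length ≤ 2
lemma jacoF_run (j : ℕ) (hj : 1 ≤ j) : jacoF j + 1 ≤ jacoF (j + 2) := by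
  have hd : jacoDin (j + 2) ≤ jacoDin j + 1 := by
    rw [jacoDin, jacoDin]
    set S := (Finset.Ico 1 (j+2)).filter (fun i => j + 2 ≤ i + jacoF i) with hS
    have hcard : (S.erase (j+1)).card ≤
        ((Finset.Ico 1 j).filter (fun i => j ≤ i + jacoF i)).card := by
      apply Finset.card_le_card_of_injOn (fun i => i - 1)
      · intro i hi
        simp only [Finset.mem_coe, hS, Finset.mem_erase, Finset.mem_filter, Finset.mem_Ico] at hi
        obtain ⟨hne, ⟨hi1, hi2⟩, hi3⟩ := hi
        have h2 : 2 ≤ i := by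
          rcases Nat.lt_or_ge i 2 with h | h
          · interval_cases i
            · rw [jacoF_one] at hi3; omega
          · exact h
        have hstep : jacoF i ≤ jacoF (i - 1) + 1 := by
          have := (jacoF_step (i-1)).2
          rwa [Nat.sub_add_cancel (by omega)] at this
        show i - 1 ∈ _
        simp only [Finset.mem_coe, Finset.mem_filter, Finset.mem_Ico]
        omega
      · intro a ha b hb h
        simp only [Finset.mem_coe, hS, Finset.mem_erase, Finset.mem_filter,
          Finset.mem_Ico] at ha hb
        have h' : a - 1 = b - 1 := h
        omega
    have := Finset.pred_card_le_card_erase (s := S) (a := j+1)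
    omega
  have e1 := jacoF_eq j
  have e2 := jacoF_eq (j + 2)
  have l1 := jacoDin_le_s6 j
  have l2 := jacoDin_le_s6 (j + 2)
  omega

lemma jacoF_lt (a b : ℕ) (ha : 1 ≤ a) (hab : a + 2 ≤ b) : jacoF a < jacoF b :=
  lt_of_lt_of_le (jacoF_run a ha) (jacoF_mono (by omega))

lemma deg_formula (n j : ℕ) (h1 : 1 ≤ j) (h2 : j ≤ n) :
    jacoDeg n j = min j (n - jacoF j) := by
  have hIoc : (Finset.Ioc j n).filter (fun k => k ≤ j + jacoF j)
      = Finset.Ioc j (min n (j + jacoF j)) := by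
    ext k
    simp only [Finset.mem_filter, Finset.mem_Ioc, le_min_iff, min_le_iff]
    omega
  rw [jacoDeg, hIoc, Nat.card_Ioc]
  have e := jacoF_eq j
  have l := jacoDin_le_s6 j
  omega

/-- The Jaconian set of `J_n(1)` has cardinality at most 3. -/
theorem stmt_6 (n : ℕ) (hn : 1 ≤ n) : (jacoJ n).card ≤ 3 := by
  set T := (Finset.Icc 1 n).filter (fun j => jacoF j = n - jacoDelta n) with hT
  have hsub : jacoJ n ⊆ insert (jacoDelta n) T := by
    intro j hj
    simp only [jacoJ, Finset.mem_filter, Finset.mem_Icc] at hj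
    obtain ⟨⟨hj1, hj2⟩, hj3⟩ := hj
    rw [deg_formula n j hj1 hj2] at hj3
    have hfle : jacoF j ≤ j := jacoF_le_self j
    simp only [hT, Finset.mem_insert, Finset.mem_filter, Finset.mem_Icc]
    omega
  have hTcard : T.card ≤ 2 := by
    rcases Finset.eq_empty_or_nonempty T with h | h
    · simp [h]
    · set a := T.min' h with ha
      have haT : a ∈ T := T.min'_mem h
      have ha1 : 1 ≤ a := by
        simp only [hT, Finset.mem_filter, Finset.mem_Icc] at haT; omega
      have hsub2 : T ⊆ {a, a + 1} := by
        intro b hb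
        have hab : a ≤ b := T.min'_le b hb
        simp only [hT, Finset.mem_filter, Finset.mem_Icc] at hb haT
        have : b < a + 2 := by
          by_contra hc
          have := jacoF_lt a b ha1 (by omega)
          omega
        simp only [Finset.mem_insert, Finset.mem_singleton]
        omega
      calc T.card ≤ ({a, a+1} : Finset ℕ).card := Finset.card_le_card hsub2
        _ ≤ 2 := Finset.card_insert_le _ _ |>.trans (by simp)
  calc (jacoJ n).card ≤ (insert (jacoDelta n) T).card := Finset.card_le_card hsub
    _ ≤ T.card + 1 := Finset.card_insert_le _ _
    _ ≤ 3 := by omega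
end
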